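/- Let d ≥ 1, let (X_i)_{i≥1} be i.i.d. ℝ^d-valued random variables whose common law has a bounded density f with respect to Lebesgue measure, let K : ℝ^d → ℝ be bounded, measurable and compactly supported, and let (Hₙ)_{n≥1} be a sequence of invertible d×d real matrices with n·|det Hₙ| → ∞ as n → ∞. Then for all x, t ∈ ℝ^d, the random variables |det Hₙ| · (1/n) ∑_{i=1}^n K_{Hₙ}(X_i − x) K_{Hₙ}(X_i − t) − ∫_{ℝ^d} K(p) K(p − Hₙ⁻¹(x − t)) f(t + Hₙp) dp converge to 0 in probability as n → ∞. -/

import Mathlib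

open MeasureTheory ProbabilityTheory Filter
open scoped ENNReal NNReal Topology

noncomputable section

/-- The rescaled kernel `K_H(v) = |det H|⁻¹ * K (H⁻¹ v)`. -/
def kernelScaled {d : ℕ} (H : Matrix (Fin d) (Fin d) ℝ) (K : (Fin d → ℝ) → ℝ)
    (v : Fin d → ℝ) : ℝ :=
  |H.det|⁻¹ * K (H⁻¹.mulVec v)

theorem change_var' {d : ℕ} (H : Matrix (Fin d) (Fin d) ℝ) (hH : H.det ≠ 0) (t : Fin d → ℝ)
    (ψ : (Fin d → ℝ) → ℝ) (hψ : Measurable ψ) :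
    ∫ y, ψ y = |H.det| * ∫ p, ψ (t + H.mulVec p) := by
  have h1 : (fun p : Fin d → ℝ => t + H.mulVec p)
      = (fun y => t + y) ∘ (Matrix.toLin' H) := by
    funext p; simp [Matrix.toLin'_apply]
  have hTmeas : Measurable fun p : Fin d → ℝ => t + H.mulVec p := by
    rw [h1]
    exact (measurable_const_add t).comp
      (Matrix.toLin' H).continuous_of_finiteDimensional.measurable
  have hmap : Measure.map (fun p => t + H.mulVec p) (volume : Measure (Fin d → ℝ))
      = ENNReal.ofReal |H.det⁻¹| • volume := by
    rw [h1, ← Measure.map_map (measurable_const_add t)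
      (Matrix.toLin' H).continuous_of_finiteDimensional.measurable,
      Real.map_matrix_volume_pi_eq_smul_volume_pi hH, Measure.map_smul,
      map_add_left_eq_self]
  have := integral_map (μ := (volume : Measure (Fin d → ℝ)))
    (φ := fun p => t + H.mulVec p) hTmeas.aemeasurable (f := ψ)
    (by rw [hmap]; exact hψ.aestronglyMeasurable.smul_measure _)
  rw [hmap, integral_smul_measure] at this
  rw [← this, ENNReal.toReal_ofReal (abs_nonneg _), abs_inv, smul_eq_mul, ← mul_assoc,
    mul_inv_cancel₀ (abs_ne_zero.2 hH), one_mul]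

theorem exp_eq {d : ℕ} {Ω : Type*} [MeasurableSpace Ω] (μ : Measure Ω)
    (Xi : Ω → (Fin d → ℝ)) (hXi : Measurable Xi)
    (f : (Fin d → ℝ) → ℝ) (hfmeas : Measurable f) (hfnonneg : ∀ y, 0 ≤ f y)
    (hlaw : μ.map Xi = volume.withDensity (fun y => ENNReal.ofReal (f y)))
    (g : (Fin d → ℝ) → ℝ) (hg : Measurable g) :
    ∫ ω, g (Xi ω) ∂μ = ∫ y, f y * g y := by
  rw [← integral_map hXi.aemeasurable hg.aestronglyMeasurable, hlaw]
  have h1 : (volume : Measure (Fin d → ℝ)).withDensity (fun y => ENNReal.ofReal (f y))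
      = volume.withDensity (fun y => ((f y).toNNReal : ℝ≥0∞)) := rfl
  rw [h1, integral_withDensity_eq_integral_smul hfmeas.real_toNNReal g]
  refine integral_congr_ae (Eventually.of_forall fun y => ?_)
  simp [NNReal.smul_def, Real.coe_toNNReal _ (hfnonneg y)]

theorem kern_mulVec {d : ℕ} (H : Matrix (Fin d) (Fin d) ℝ) (hH : H.det ≠ 0)
    (K : (Fin d → ℝ) → ℝ) (q : Fin d → ℝ) :
    kernelScaled H K (H.mulVec q) = |H.det|⁻¹ * K q := by
  rw [kernelScaled, Matrix.mulVec_mulVec, Matrix.nonsing_inv_mul H (isUnit_iff_ne_zero.2 hH),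
    Matrix.one_mulVec]

theorem arg_eq {d : ℕ} (H : Matrix (Fin d) (Fin d) ℝ) (hH : H.det ≠ 0)
    (t x p : Fin d → ℝ) :
    t + H.mulVec p - x = H.mulVec (p - H⁻¹.mulVec (x - t)) := by
  rw [Matrix.mulVec_sub, Matrix.mulVec_mulVec, Matrix.mul_nonsing_inv H (isUnit_iff_ne_zero.2 hH),
    Matrix.one_mulVec]
  abel

set_option maxHeartbeats 1000000 in
/-- Conclusion of Lemma 2 in additive form: if `n |det Hₙ| → ∞`, then
`|det Hₙ| W₂ₙ(x,t) − ∫ K(p) K(p − Hₙ⁻¹(x−t)) f(t + Hₙ p) dp → 0` in probability. -/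
theorem W2n_tendsto_inProbability {d : ℕ} (hd : 1 ≤ d)
    {Ω : Type*} [MeasurableSpace Ω] (μ : Measure Ω) [IsProbabilityMeasure μ]
    (X : ℕ → Ω → (Fin d → ℝ)) (hXmeas : ∀ i, Measurable (X i))
    (hindep : iIndepFun X μ)
    (f : (Fin d → ℝ) → ℝ) (hfmeas : Measurable f) (hfnonneg : ∀ y, 0 ≤ f y)
    (hfbd : ∃ C, ∀ y, f y ≤ C)
    (hlaw : ∀ i, μ.map (X i) = volume.withDensity (fun y => ENNReal.ofReal (f y)))
    (K : (Fin d → ℝ) → ℝ) (hKmeas : Measurable K) (hKbd : ∃ C, ∀ u, |K u| ≤ C)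
    (hKsupp : HasCompactSupport K)
    (Hseq : ℕ → Matrix (Fin d) (Fin d) ℝ) (hHinv : ∀ n, (Hseq n).det ≠ 0)
    (hHlim : Tendsto (fun n : ℕ => (n : ℝ) * |(Hseq n).det|) atTop atTop)
    (x t : Fin d → ℝ) :
    ∀ δ : ℝ, 0 < δ →
      Tendsto (fun n : ℕ =>
          μ {ω | δ < abs (|(Hseq n).det| * ((n : ℝ)⁻¹ *
              ∑ i ∈ Finset.range n,
                kernelScaled (Hseq n) K (X i ω - x) * kernelScaled (Hseq n) K (X i ω - t)) -
            ∫ p, K p * K (p - (Hseq n)⁻¹.mulVec (x - t)) * f (t + (Hseq n).mulVec p))})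
        atTop (𝓝 0) := by
  intro δ hδ
  obtain ⟨Cf0, hCf0⟩ := hfbd
  obtain ⟨CK0, hCK0⟩ := hKbd
  set Cf := max Cf0 0 with hCfdef
  set CK := max CK0 0 with hCKdef
  have hCf : ∀ y, f y ≤ Cf := fun y => (hCf0 y).trans (le_max_left _ _)
  have hCK : ∀ u, |K u| ≤ CK := fun u => (hCK0 u).trans (le_max_left _ _)
  have hCfpos : 0 ≤ Cf := le_max_right _ _
  have hCKpos : 0 ≤ CK := le_max_right _ _
  -- integrability of K^2
  have hK2supp : HasCompactSupport fun p => (K p) ^ 2 := by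
    simpa [Function.comp_def] using hKsupp.comp_left (g := fun r : ℝ => r ^ 2) (by norm_num)
  have hK2int : Integrable (fun p => (K p) ^ 2) (volume : Measure (Fin d → ℝ)) := by
    rw [← Set.indicator_eq_self.2 (subset_tsupport fun p => (K p) ^ 2),
      integrable_indicator_iff (isClosed_tsupport _).measurableSet]
    refine Measure.integrableOn_of_bounded hK2supp.measure_lt_top.ne
      ((hKmeas.pow_const 2).aestronglyMeasurable) (M := CK ^ 2) ?_
    refine Eventually.of_forall fun p => ?_
    rw [Real.norm_eq_abs, abs_pow, ← sq_abs, abs_abs]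
    exact pow_le_pow_left₀ (abs_nonneg _) (hCK p) 2
  set J := ∫ p, (K p) ^ 2 with hJdef
  have hJpos : 0 ≤ J := integral_nonneg fun p => sq_nonneg _
  set B := Cf * CK ^ 2 * J with hBdef
  have hBpos : 0 ≤ B := by positivity
  -- key bound for each n ≥ 1
  have key : ∀ n : ℕ, 1 ≤ n →
      μ {ω | δ < abs (|(Hseq n).det| * ((n : ℝ)⁻¹ *
              ∑ i ∈ Finset.range n,
                kernelScaled (Hseq n) K (X i ω - x) * kernelScaled (Hseq n) K (X i ω - t)) -
            ∫ p, K p * K (p - (Hseq n)⁻¹.mulVec (x - t)) * f (t + (Hseq n).mulVec p))}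
        ≤ ENNReal.ofReal (B / ((n : ℝ) * |(Hseq n).det|) / δ ^ 2) := by
    intro n hn
    set H := Hseq n with hHdef
    have hH : H.det ≠ 0 := hHinv n
    set D := |H.det| with hDdef
    have hD : 0 < D := abs_pos.2 hH
    have hnpos : (0 : ℝ) < n := by exact_mod_cast hn
    set a := H⁻¹.mulVec (x - t) with hadef
    set g : (Fin d → ℝ) → ℝ :=
      fun y => kernelScaled H K (y - x) * kernelScaled H K (y - t) with hgdef
    have hmulVec : ∀ A : Matrix (Fin d) (Fin d) ℝ, Measurable fun v : Fin d → ℝ => A.mulVec v := by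
      intro A
      have : (fun v : Fin d → ℝ => A.mulVec v) = ⇑(Matrix.toLin' A) := by
        funext v; simp [Matrix.toLin'_apply]
      rw [this]; exact (Matrix.toLin' A).continuous_of_finiteDimensional.measurable
    have hker : ∀ c : Fin d → ℝ, Measurable fun y : Fin d → ℝ => kernelScaled H K (y - c) := by
      intro c
      exact measurable_const.mul
        (hKmeas.comp ((hmulVec H⁻¹).comp (measurable_id.sub measurable_const)))
    have hgmeas : Measurable g := (hker x).mul (hker t)
    have hDne : D ≠ 0 := hD.ne'
    have hDD : D * D⁻¹ = 1 := mul_inv_cancel₀ hDne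
    have hkerbd : ∀ v, |kernelScaled H K v| ≤ D⁻¹ * CK := by
      intro v
      rw [kernelScaled, abs_mul, abs_inv, abs_abs, ← hDdef]
      exact mul_le_mul_of_nonneg_left (hCK _) (by positivity)
    have hgbd : ∀ y, |g y| ≤ (D⁻¹ * CK) ^ 2 := by
      intro y
      simp only [hgdef, abs_mul, sq]
      exact mul_le_mul (hkerbd _) (hkerbd _) (abs_nonneg _) (by positivity)
    -- the composition with Hp
    have hgt : ∀ p, g (t + H.mulVec p) = D⁻¹ * D⁻¹ * (K p * K (p - a)) := by
      intro p
      simp only [hgdef]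
      have h2 : t + H.mulVec p - t = H.mulVec p := by abel
      rw [arg_eq H hH t x p, h2, kern_mulVec H hH, kern_mulVec H hH, ← hDdef, ← hadef]
      ring
    set Y : ℕ → Ω → ℝ := fun i ω => g (X i ω) with hYdef
    have hYmeas : ∀ i, Measurable (Y i) := fun i => hgmeas.comp (hXmeas i)
    have hYmem : ∀ i, MemLp (Y i) 2 μ := fun i =>
      (memLp_top_of_bound (hYmeas i).aestronglyMeasurable _
        (Eventually.of_forall fun ω => hgbd (X i ω))).mono_exponent le_top
    have hYint : ∀ i, Integrable (Y i) μ := fun i => (hYmem i).integrable one_le_two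
    -- first moment
    set I := ∫ p, K p * K (p - a) * f (t + H.mulVec p) with hIdef
    have hEY : ∀ i, μ[Y i] = D⁻¹ * I := by
      intro i
      rw [hYdef]
      rw [exp_eq μ (X i) (hXmeas i) f hfmeas hfnonneg (hlaw i) g hgmeas]
      rw [change_var' H hH t (fun y => f y * g y) (hfmeas.mul hgmeas)]
      have : ∀ p : Fin d → ℝ, f (t + H.mulVec p) * g (t + H.mulVec p)
          = D⁻¹ * D⁻¹ * (K p * K (p - a) * f (t + H.mulVec p)) := by
        intro p; rw [hgt p]; ring
      rw [integral_congr_ae (Eventually.of_forall this), integral_const_mul, ← hDdef, ← hIdef]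
      calc D * (D⁻¹ * D⁻¹ * I) = (D * D⁻¹) * (D⁻¹ * I) := by ring
        _ = D⁻¹ * I := by rw [hDD, one_mul]
    -- second moment
    have hEY2 : ∀ i, μ[(Y i) ^ 2] ≤ D⁻¹ * D⁻¹ * D⁻¹ * B := by
      intro i
      have h1 : (Y i) ^ 2 = fun ω => (fun y => (g y) ^ 2) (X i ω) := by
        funext ω; simp [hYdef]
      rw [h1, exp_eq μ (X i) (hXmeas i) f hfmeas hfnonneg (hlaw i) _ (hgmeas.pow_const 2),
        change_var' H hH t (fun y => f y * g y ^ 2) (hfmeas.mul (hgmeas.pow_const 2))]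
      have h2 : ∀ p : Fin d → ℝ, f (t + H.mulVec p) * (g (t + H.mulVec p)) ^ 2
          = D⁻¹ * D⁻¹ * D⁻¹ * D⁻¹ * (f (t + H.mulVec p) * ((K p) ^ 2 * (K (p - a)) ^ 2)) := by
        intro p; rw [hgt p]; ring
      rw [integral_congr_ae (Eventually.of_forall h2), integral_const_mul]
      have h3 : ∫ p, f (t + H.mulVec p) * ((K p) ^ 2 * (K (p - a)) ^ 2)
          ≤ ∫ p, Cf * CK ^ 2 * (K p) ^ 2 := by
        refine integral_mono_of_nonneg (Eventually.of_forall fun p => ?_)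
          (hK2int.const_mul _) (Eventually.of_forall fun p => ?_)
        · have := hfnonneg (t + H.mulVec p); positivity
        · have e1 : (K (p - a)) ^ 2 ≤ CK ^ 2 := by
            rw [← sq_abs]; exact pow_le_pow_left₀ (abs_nonneg _) (hCK _) 2
          calc f (t + H.mulVec p) * ((K p) ^ 2 * (K (p - a)) ^ 2)
              = (f (t + H.mulVec p) * (K (p - a)) ^ 2) * (K p) ^ 2 := by ring
            _ ≤ (Cf * CK ^ 2) * (K p) ^ 2 := by
                refine mul_le_mul_of_nonneg_right
                  (mul_le_mul (hCf _) e1 (sq_nonneg _) hCfpos) (sq_nonneg _)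
      rw [integral_const_mul] at h3
      rw [← hDdef]
      calc D * (D⁻¹ * D⁻¹ * D⁻¹ * D⁻¹ * ∫ p, f (t + H.mulVec p) * ((K p) ^ 2 * (K (p - a)) ^ 2))
          ≤ D * (D⁻¹ * D⁻¹ * D⁻¹ * D⁻¹ * (Cf * CK ^ 2 * J)) := by
            refine mul_le_mul_of_nonneg_left (mul_le_mul_of_nonneg_left ?_ (by positivity)) hD.le
            rw [hJdef]; exact h3
        _ = (D * D⁻¹) * (D⁻¹ * D⁻¹ * D⁻¹ * (Cf * CK ^ 2 * J)) := by ring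
        _ = D⁻¹ * D⁻¹ * D⁻¹ * B := by rw [hDD, hBdef, one_mul]
    -- variance bound
    have hvar : ∀ i, variance (Y i) μ ≤ D⁻¹ * D⁻¹ * D⁻¹ * B := fun i =>
      (variance_le_expectation_sq (hYmeas i).aestronglyMeasurable).trans (hEY2 i)
    have hvarsum : variance (∑ i ∈ Finset.range n, Y i) μ
        = ∑ i ∈ Finset.range n, variance (Y i) μ := by
      refine IndepFun.variance_sum (fun i _ => hYmem i) ?_
      intro i _ j _ hij
      exact (hindep.indepFun hij).comp hgmeas hgmeas
    set T : Ω → ℝ := fun ω => D * ((n : ℝ)⁻¹ * ∑ i ∈ Finset.range n, Y i ω) with hTdef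
    have hTsmul : T = (D * (n : ℝ)⁻¹) • (∑ i ∈ Finset.range n, Y i) := by
      funext ω
      simp only [hTdef, Pi.smul_apply, Finset.sum_apply, smul_eq_mul]
      ring
    have hTmem : MemLp T 2 μ := by
      rw [hTsmul]
      exact (memLp_finsetSum' _ fun i _ => hYmem i).const_smul _
    have hTvar : variance T μ ≤ B / ((n : ℝ) * D) := by
      rw [hTsmul, variance_smul, hvarsum]
      have h4 : ∑ i ∈ Finset.range n, variance (Y i) μ ≤ (n : ℝ) * (D⁻¹ * D⁻¹ * D⁻¹ * B) := by
        have := Finset.sum_le_card_nsmul (Finset.range n) (fun i => variance (Y i) μ)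
          (D⁻¹ * D⁻¹ * D⁻¹ * B) (fun i _ => hvar i)
        simpa [nsmul_eq_mul] using this
      have hnn : (n : ℝ) * (n : ℝ)⁻¹ = 1 := mul_inv_cancel₀ hnpos.ne'
      calc (D * (n : ℝ)⁻¹) ^ 2 * ∑ i ∈ Finset.range n, variance (Y i) μ
          ≤ (D * (n : ℝ)⁻¹) ^ 2 * ((n : ℝ) * (D⁻¹ * D⁻¹ * D⁻¹ * B)) := by
            refine mul_le_mul_of_nonneg_left h4 (sq_nonneg _)
        _ = (D * D⁻¹) * (D * D⁻¹) * ((n : ℝ) * (n : ℝ)⁻¹) * ((n : ℝ)⁻¹ * (D⁻¹ * B)) := by ring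
        _ = B / ((n : ℝ) * D) := by rw [hDD, hnn, div_eq_mul_inv, mul_inv]; ring
    have hμT : μ[T] = I := by
      have h5 : ∫ ω, (∑ i ∈ Finset.range n, Y i) ω ∂μ = ∑ i ∈ Finset.range n, μ[Y i] := by
        simp only [Finset.sum_apply]
        exact integral_finset_sum _ fun i _ => hYint i
      have h6 : ∑ i ∈ Finset.range n, μ[Y i] = (n : ℝ) * (D⁻¹ * I) := by
        simp [hEY, Finset.sum_const, nsmul_eq_mul]
      have h7 : μ[T] = (D * (n : ℝ)⁻¹) * ∫ ω, (∑ i ∈ Finset.range n, Y i) ω ∂μ := by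
        rw [← integral_const_mul]
        refine integral_congr_ae (Eventually.of_forall fun ω => ?_)
        simp only [hTdef, Finset.sum_apply]
        ring
      rw [h7, h5, h6]
      have hnn : (n : ℝ) * (n : ℝ)⁻¹ = 1 := mul_inv_cancel₀ hnpos.ne'
      calc D * (n : ℝ)⁻¹ * ((n : ℝ) * (D⁻¹ * I))
          = (D * D⁻¹) * ((n : ℝ) * (n : ℝ)⁻¹) * I := by ring
        _ = I := by rw [hDD, hnn, one_mul, one_mul]
    -- Chebyshev
    have hcheb := meas_ge_le_variance_div_sq hTmem hδ
    have hsub : {ω | δ < abs (|(Hseq n).det| * ((n : ℝ)⁻¹ *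
              ∑ i ∈ Finset.range n,
                kernelScaled (Hseq n) K (X i ω - x) * kernelScaled (Hseq n) K (X i ω - t)) -
            ∫ p, K p * K (p - (Hseq n)⁻¹.mulVec (x - t)) * f (t + (Hseq n).mulVec p))}
        ⊆ {ω | δ ≤ |T ω - μ[T]|} := by
      intro ω hω
      simp only [Set.mem_setOf_eq] at hω ⊢
      rw [hμT]
      simp only [hTdef, hYdef, hgdef]
      exact le_of_lt hω
    refine (measure_mono hsub).trans (hcheb.trans ?_)
    refine ENNReal.ofReal_le_ofReal ?_
    gcongr

  -- conclude
  have hlim : Tendsto (fun n : ℕ => ENNReal.ofReal (B / ((n : ℝ) * |(Hseq n).det|) / δ ^ 2))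
      atTop (𝓝 0) := by
    have h0 : Tendsto (fun n : ℕ => B / ((n : ℝ) * |(Hseq n).det|) / δ ^ 2) atTop (𝓝 0) := by
      have h1 : (fun n : ℕ => B / ((n : ℝ) * |(Hseq n).det|) / δ ^ 2)
          = fun n : ℕ => (B / δ ^ 2) * ((n : ℝ) * |(Hseq n).det|)⁻¹ := by
        funext n; ring
      rw [h1]
      have := (hHlim.inv_tendsto_atTop).const_mul (B / δ ^ 2)
      simpa using this
    have := ENNReal.tendsto_ofReal h0
    simpa using this
  refine tendsto_of_tendsto_of_tendsto_of_le_of_le' tendsto_const_nhds hlim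
    (Eventually.of_forall fun n => zero_le) ?_
  filter_upwards [eventually_ge_atTop 1] with n hn
  exact key n hn
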